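/- Consider the system ẋ₁ = −x₁(1 − sin x₂), ẋ₂ = −x₂ + u. For any input u, along any trajectory |x₁(t)| ≤ |ξ₁| e^{|ξ₂|} for all t ≥ 0. -/

import Mathlib

/-- The vector field of the system ẋ₁ = −x₁(1 − sin x₂), ẋ₂ = −x₂ + u. -/
noncomputable def fsys (x : ℝ × ℝ) (u : ℝ) : ℝ × ℝ :=
  (-x.1 * (1 - Real.sin x.2), -x.2 + u)

/-- For any input u, along any trajectory of the system,
|x₁(t)| ≤ |ξ₁| e^{|ξ₂|} for all t ≥ 0. -/
theorem stmt11 (x : ℝ → ℝ × ℝ) (u : ℝ → ℝ) (hu : Measurable u)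
    (hx : ∀ t, 0 ≤ t → HasDerivAt x (fsys (x t) (u t)) t) :
    ∀ t, 0 ≤ t → |(x t).1| ≤ |(x 0).1| * Real.exp |(x 0).2| := by
  intro t ht
  set g : ℝ → ℝ := fun s => ((x s).1) ^ 2 with hg
  have hd : ∀ s, 0 ≤ s → HasDerivAt g
      (2 * (x s).1 ^ 1 * (-(x s).1 * (1 - Real.sin (x s).2))) s := by
    intro s hs
    have h1 : HasDerivAt (fun s => (x s).1) (fsys (x s) (u s)).1 s :=
      (hx s hs).fst
    simpa [fsys] using h1.fun_pow 2
  have hanti : AntitoneOn g (Set.Ici (0 : ℝ)) := by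
    apply antitoneOn_of_deriv_nonpos (convex_Ici 0)
    · intro s hs
      exact ((hd s hs).continuousAt).continuousWithinAt
    · intro s hs
      rw [interior_Ici] at hs
      exact (hd s (le_of_lt hs)).differentiableAt.differentiableWithinAt
    · intro s hs
      rw [interior_Ici] at hs
      rw [(hd s (le_of_lt hs)).deriv]
      have hsin := Real.sin_le_one (x s).2
      nlinarith [sq_nonneg ((x s).1)]
  have hle : g t ≤ g 0 := hanti Set.self_mem_Ici ht ht
  have habs : |(x t).1| ≤ |(x 0).1| := by
    have := hle
    simp only [hg] at this
    nlinarith [abs_nonneg ((x t).1), abs_nonneg ((x 0).1), sq_abs ((x t).1), sq_abs ((x 0).1)]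
  calc |(x t).1| ≤ |(x 0).1| := habs
    _ = |(x 0).1| * 1 := (mul_one _).symm
    _ ≤ |(x 0).1| * Real.exp |(x 0).2| :=
      mul_le_mul_of_nonneg_left (Real.one_le_exp (abs_nonneg _)) (abs_nonneg _)
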